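/- The uniform-input statistical strength S_u is not an LOSR monotone: there exist natural numbers r, s, a no-signaling behavior P in the (r,s) Bell scenario, and an LOSR wiring W from the (r,s) scenario to itself such that S_u(W(P)) > S_u(P). -/

import Mathlib

open scoped ENNReal
open Finset

/-- A probability distribution on a finite type. -/
def IsDist {Z : Type*} [Fintype Z] (p : Z → ℝ) : Prop :=
  (∀ z, 0 ≤ p z) ∧ ∑ z, p z = 1

/-- Relative entropy (Kullback-Leibler divergence) of finitely supported
distributions, valued in `[0,∞]`, with the conventions `0·log(0/t) = 0` and
`S(p‖q) = ∞` whenever `q` vanishes at a point where `p` does not. -/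
noncomputable def relEnt {Z : Type*} [Fintype Z] (p q : Z → ℝ) : ℝ≥0∞ :=
  if ∃ z, p z ≠ 0 ∧ q z = 0 then ⊤
  else ENNReal.ofReal (∑ z, p z * Real.log (p z / q z))

/-- A behavior in the (r,s) Bell scenario: `P a b x y = P(a,b|x,y)`. -/
def IsBehavior {r s : ℕ} (P : Fin r → Fin r → Fin s → Fin s → ℝ) : Prop :=
  (∀ a b x y, 0 ≤ P a b x y) ∧ ∀ x y, ∑ a, ∑ b, P a b x y = 1

/-- The no-signaling conditions. -/
def NoSignaling {r s : ℕ} (P : Fin r → Fin r → Fin s → Fin s → ℝ) : Prop :=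
  (∀ b x x' y, ∑ a, P a b x y = ∑ a, P a b x' y) ∧
  (∀ a x y y', ∑ b, P a b x y = ∑ b, P a b x y')

/-- Local (local-hidden-variable) behavior. -/
def IsLocal {r s : ℕ} (P : Fin r → Fin r → Fin s → Fin s → ℝ) : Prop :=
  ∃ (n : ℕ) (q : Fin n → ℝ) (PA : Fin r → Fin s → Fin n → ℝ)
    (PB : Fin r → Fin s → Fin n → ℝ),
    IsDist q ∧
    (∀ x l, (∀ a, 0 ≤ PA a x l) ∧ ∑ a, PA a x l = 1) ∧
    (∀ y l, (∀ b, 0 ≤ PB b y l) ∧ ∑ b, PB b y l = 1) ∧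
    (∀ a b x y, P a b x y = ∑ l, q l * PA a x l * PB b y l)

/-- Output distribution `P(·,·|x,y)` of a behavior for fixed inputs. -/
def outDist {r s : ℕ} (P : Fin r → Fin r → Fin s → Fin s → ℝ) (x y : Fin s) :
    Fin r × Fin r → ℝ := fun ab => P ab.1 ab.2 x y

/-- The behavior relative entropy `S_b(P‖P')`: the maximum over input pairs
`(x,y)` of the relative entropy of the output distributions. -/
noncomputable def Sb {r s : ℕ} (P P' : Fin r → Fin r → Fin s → Fin s → ℝ) : ℝ≥0∞ :=
  Finset.univ.sup fun xy : Fin s × Fin s =>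
    relEnt (outDist P xy.1 xy.2) (outDist P' xy.1 xy.2)

/-- A global wiring from the (r,s) scenario to the (rf,sf) scenario. -/
structure GlobalWiring (r s rf sf : ℕ) where
  I : Fin s → Fin s → Fin sf → Fin sf → ℝ          -- I x y χ ψ  =  I(x,y|χ,ψ)
  O : Fin rf → Fin rf → Fin r → Fin r → Fin s → Fin s → Fin sf → Fin sf → ℝ
    -- O α β a b x y χ ψ  =  O(α,β|a,b,x,y,χ,ψ)
  I_nonneg : ∀ x y χ ψ, 0 ≤ I x y χ ψ
  I_sum : ∀ χ ψ, ∑ x, ∑ y, I x y χ ψ = 1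
  O_nonneg : ∀ α β a b x y χ ψ, 0 ≤ O α β a b x y χ ψ
  O_sum : ∀ a b x y χ ψ, ∑ α, ∑ β, O α β a b x y χ ψ = 1

/-- Action of a global wiring on a behavior. -/
noncomputable def GlobalWiring.apply {r s rf sf : ℕ} (W : GlobalWiring r s rf sf)
    (P : Fin r → Fin r → Fin s → Fin s → ℝ) :
    Fin rf → Fin rf → Fin sf → Fin sf → ℝ :=
  fun α β χ ψ => ∑ a, ∑ b, ∑ x, ∑ y,
    W.O α β a b x y χ ψ * P a b x y * W.I x y χ ψ

/-- LOSR wiring: a global wiring whose input and output boxes are local. -/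
def GlobalWiring.IsLOSR {r s rf sf : ℕ} (W : GlobalWiring r s rf sf) : Prop :=
  ∃ (n m : ℕ) (q : Fin n → ℝ) (q' : Fin m → ℝ)
    (IA : Fin s → Fin sf → Fin n → ℝ) (IB : Fin s → Fin sf → Fin n → ℝ)
    (OA : Fin rf → Fin r → Fin s → Fin sf → Fin m → ℝ)
    (OB : Fin rf → Fin r → Fin s → Fin sf → Fin m → ℝ),
    IsDist q ∧ IsDist q' ∧
    (∀ χ l, (∀ x, 0 ≤ IA x χ l) ∧ ∑ x, IA x χ l = 1) ∧
    (∀ ψ l, (∀ y, 0 ≤ IB y ψ l) ∧ ∑ y, IB y ψ l = 1) ∧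
    (∀ a x χ u, (∀ α, 0 ≤ OA α a x χ u) ∧ ∑ α, OA α a x χ u = 1) ∧
    (∀ b y ψ u, (∀ β, 0 ≤ OB β b y ψ u) ∧ ∑ β, OB β b y ψ u = 1) ∧
    (∀ x y χ ψ, W.I x y χ ψ = ∑ l, q l * IA x χ l * IB y ψ l) ∧
    (∀ α β a b x y χ ψ,
      W.O α β a b x y χ ψ = ∑ u, q' u * OA α a x χ u * OB β b y ψ u)

/-- UCLOSR wiring: a global wiring whose input and output boxes are products. -/
def GlobalWiring.IsUCLOSR {r s rf sf : ℕ} (W : GlobalWiring r s rf sf) : Prop :=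
  ∃ (IA : Fin s → Fin sf → ℝ) (IB : Fin s → Fin sf → ℝ)
    (OA : Fin rf → Fin r → Fin s → Fin sf → ℝ)
    (OB : Fin rf → Fin r → Fin s → Fin sf → ℝ),
    (∀ χ, (∀ x, 0 ≤ IA x χ) ∧ ∑ x, IA x χ = 1) ∧
    (∀ ψ, (∀ y, 0 ≤ IB y ψ) ∧ ∑ y, IB y ψ = 1) ∧
    (∀ a x χ, (∀ α, 0 ≤ OA α a x χ) ∧ ∑ α, OA α a x χ = 1) ∧
    (∀ b y ψ, (∀ β, 0 ≤ OB β b y ψ) ∧ ∑ β, OB β b y ψ = 1) ∧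
    (∀ x y χ ψ, W.I x y χ ψ = IA x χ * IB y ψ) ∧
    (∀ α β a b x y χ ψ, W.O α β a b x y χ ψ = OA α a x χ * OB β b y ψ)

/-- The relative entropy of nonlocality `S_nl`. -/
noncomputable def Snl {r s : ℕ} (P : Fin r → Fin r → Fin s → Fin s → ℝ) : ℝ≥0∞ :=
  ⨅ (Q : Fin r → Fin r → Fin s → Fin s → ℝ) (_ : IsBehavior Q ∧ IsLocal Q), Sb P Q

/-- The uniform-input statistical strength `S_u`. -/
noncomputable def Su {r s : ℕ} (P : Fin r → Fin r → Fin s → Fin s → ℝ) : ℝ≥0∞ :=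
  ⨅ (Q : Fin r → Fin r → Fin s → Fin s → ℝ) (_ : IsBehavior Q ∧ IsLocal Q),
    ((s : ℝ≥0∞) ^ 2)⁻¹ * ∑ x, ∑ y, relEnt (outDist P x y) (outDist Q x y)

/-- The uncorrelated-input statistical strength `S_uc`. -/
noncomputable def Suc {r s : ℕ} (P : Fin r → Fin r → Fin s → Fin s → ℝ) : ℝ≥0∞ :=
  ⨆ (DA : Fin s → ℝ) (DB : Fin s → ℝ) (_ : IsDist DA ∧ IsDist DB),
    ⨅ (Q : Fin r → Fin r → Fin s → Fin s → ℝ) (_ : IsBehavior Q ∧ IsLocal Q),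
      ∑ x, ∑ y, ENNReal.ofReal (DA x * DB y) *
        relEnt (outDist P x y) (outDist Q x y)

/-! ### Auxiliary constructions for the counterexample -/

section Counterexample

/-- Parity collapse of the four inputs onto `{0,1}`. -/
def gmap : Fin 4 → Fin 4 := fun χ => if χ.val % 2 = 0 then 0 else 1

/-- The "anticorrelated" input cells. -/
def oddcell (x y : Fin 4) : Prop := x.val % 2 = 1 ∧ y.val % 2 = 1

instance (x y : Fin 4) : Decidable (oddcell x y) := by unfold oddcell; infer_instance

/-- PR box on inputs `{0,1}`, uniform noise whenever an input is `≥ 2`. -/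
noncomputable def myP : Fin 2 → Fin 2 → Fin 4 → Fin 4 → ℝ := fun a b x y =>
  if x.val ≤ 1 ∧ y.val ≤ 1 then
    (if ((a = b) ↔ ¬ oddcell x y) then 1/2 else 0)
  else 1/4

/-- The uniform local behavior. -/
noncomputable def myQ0 : Fin 2 → Fin 2 → Fin 4 → Fin 4 → ℝ := fun _ _ _ _ => 1/4

/-- LOSR wiring collapsing inputs by parity and forwarding outputs. -/
noncomputable def myW : GlobalWiring 2 4 2 4 where
  I := fun x y χ ψ => (if x = gmap χ then 1 else 0) * (if y = gmap ψ then 1 else 0)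
  O := fun α β a b _ _ _ _ => (if α = a then 1 else 0) * (if β = b then 1 else 0)
  I_nonneg := by intro x y χ ψ; positivity
  I_sum := by
    intro χ ψ
    rw [← Finset.sum_mul_sum]
    simp
  O_nonneg := by intro α β a b x y χ ψ; positivity
  O_sum := by
    intro a b x y χ ψ
    rw [← Finset.sum_mul_sum]
    simp

lemma WP_eq (α β : Fin 2) (χ ψ : Fin 4) :
    myW.apply myP α β χ ψ = myP α β (gmap χ) (gmap ψ) := by
  show (∑ a, ∑ b, ∑ x, ∑ y,
      ((if α = a then (1:ℝ) else 0) * (if β = b then 1 else 0)) * myP a b x y *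
        ((if x = gmap χ then 1 else 0) * (if y = gmap ψ then 1 else 0))) = _
  simp [ite_mul, mul_ite, mul_zero, zero_mul, Finset.sum_ite_eq, Finset.sum_ite_eq',
    mul_comm]

lemma WP_dist (α β : Fin 2) (χ ψ : Fin 4) :
    myW.apply myP α β χ ψ = if ((α = β) ↔ ¬ oddcell χ ψ) then 1/2 else 0 := by
  rw [WP_eq]
  fin_cases χ <;> fin_cases ψ <;>
    simp [myP, gmap, oddcell]

lemma key_ineq (q1 q2 : ℝ) (h1 : 0 < q1) (h2 : 0 < q2) :
    1 - (q1 + q2) ≤ 1/2 * Real.log (1/2 / q1) + 1/2 * Real.log (1/2 / q2) := by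
  have hs : 0 < q1 + q2 := by linarith
  have hlog : Real.log (q1 + q2) ≤ (q1 + q2) - 1 := Real.log_le_sub_one_of_pos hs
  have hmul : q1 * q2 ≤ ((q1 + q2) / 2) ^ 2 := by nlinarith [sq_nonneg (q1 - q2)]
  have h3 : Real.log (q1 * q2) ≤ 2 * Real.log ((q1 + q2) / 2) := by
    calc Real.log (q1 * q2) ≤ Real.log (((q1 + q2) / 2) ^ 2) :=
          Real.log_le_log (by positivity) hmul
      _ = 2 * Real.log ((q1 + q2) / 2) := by rw [Real.log_pow]; norm_num
  have e1 : Real.log (1/2 / q1) = -Real.log 2 - Real.log q1 := by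
    rw [Real.log_div (by norm_num) h1.ne', one_div, Real.log_inv]
  have e2 : Real.log (1/2 / q2) = -Real.log 2 - Real.log q2 := by
    rw [Real.log_div (by norm_num) h2.ne', one_div, Real.log_inv]
  have e3 : Real.log (q1 * q2) = Real.log q1 + Real.log q2 := Real.log_mul h1.ne' h2.ne'
  have e4 : Real.log ((q1 + q2) / 2) = Real.log (q1 + q2) - Real.log 2 :=
    Real.log_div hs.ne' (by norm_num)
  rw [e1, e2]
  rw [e3, e4] at h3
  linarith

lemma chsh (p0 p1 q0 q1 : ℝ) (hp0 : 0 ≤ p0) (hp0' : p0 ≤ 1) (hp1 : 0 ≤ p1)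
    (hp1' : p1 ≤ 1) (hq0 : 0 ≤ q0) (hq0' : q0 ≤ 1) (hq1 : 0 ≤ q1) (hq1' : q1 ≤ 1) :
    (p0*q0 + (1-p0)*(1-q0)) + (p0*q1 + (1-p0)*(1-q1)) + (p1*q0 + (1-p1)*(1-q0)) +
      (p1*(1-q1) + (1-p1)*q1) ≤ 3 := by
  nlinarith [mul_nonneg hp0 hq0, mul_nonneg hp1 hq1,
    mul_nonneg (sub_nonneg.2 hp0') (sub_nonneg.2 hq0'),
    mul_nonneg (sub_nonneg.2 hp1') (sub_nonneg.2 hq1'),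
    mul_nonneg hp0 (sub_nonneg.2 hq1'), mul_nonneg (sub_nonneg.2 hp0') hq0,
    mul_nonneg hp1 (sub_nonneg.2 hq0'), mul_nonneg (sub_nonneg.2 hp1') hq1,
    mul_nonneg hp0 (sub_nonneg.2 hq0'), mul_nonneg (sub_nonneg.2 hp0') hq1,
    mul_nonneg hp1 hq0, mul_nonneg (sub_nonneg.2 hp1') (sub_nonneg.2 hq1')]

lemma sumS_le (pa pb : Fin 4 → ℝ) (ha : ∀ x, 0 ≤ pa x ∧ pa x ≤ 1)
    (hb : ∀ y, 0 ≤ pb y ∧ pb y ≤ 1) :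
    ∑ x : Fin 4, ∑ y : Fin 4,
        (if oddcell x y then pa x * (1 - pb y) + (1 - pa x) * pb y
          else pa x * pb y + (1 - pa x) * (1 - pb y)) ≤ 12 := by
  have c1 := chsh (pa 0) (pa 1) (pb 0) (pb 1) (ha 0).1 (ha 0).2 (ha 1).1 (ha 1).2
    (hb 0).1 (hb 0).2 (hb 1).1 (hb 1).2
  have c2 := chsh (pa 0) (pa 1) (pb 2) (pb 3) (ha 0).1 (ha 0).2 (ha 1).1 (ha 1).2
    (hb 2).1 (hb 2).2 (hb 3).1 (hb 3).2
  have c3 := chsh (pa 2) (pa 3) (pb 0) (pb 1) (ha 2).1 (ha 2).2 (ha 3).1 (ha 3).2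
    (hb 0).1 (hb 0).2 (hb 1).1 (hb 1).2
  have c4 := chsh (pa 2) (pa 3) (pb 2) (pb 3) (ha 2).1 (ha 2).2 (ha 3).1 (ha 3).2
    (hb 2).1 (hb 2).2 (hb 3).1 (hb 3).2
  simp only [Fin.sum_univ_four]
  norm_num [oddcell, show ((3:Fin 4)).val = 3 from rfl]
  linarith

lemma myP_behavior : IsBehavior myP := by
  constructor
  · intro a b x y
    unfold myP
    split
    · split <;> norm_num
    · norm_num
  · intro x y
    fin_cases x <;> fin_cases y <;>
      simp [myP, oddcell, Fin.sum_univ_two] <;> norm_num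

lemma myP_margA : ∀ (b : Fin 2) (x y : Fin 4), ∑ a, myP a b x y = 1/2 := by
  intro b x y
  fin_cases b <;> fin_cases x <;> fin_cases y <;>
    simp [myP, oddcell, Fin.sum_univ_two] <;> norm_num

lemma myP_margB : ∀ (a : Fin 2) (x y : Fin 4), ∑ b, myP a b x y = 1/2 := by
  intro a x y
  fin_cases a <;> fin_cases x <;> fin_cases y <;>
    simp [myP, oddcell, Fin.sum_univ_two] <;> norm_num

lemma myP_nosignaling : NoSignaling myP := by
  constructor
  · intro b x x' y; rw [myP_margA, myP_margA]
  · intro a x y y'; rw [myP_margB, myP_margB]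

lemma myW_losr : myW.IsLOSR := by
  refine ⟨1, 1, (fun _ => 1), (fun _ => 1),
    (fun x χ _ => if x = gmap χ then 1 else 0), (fun y ψ _ => if y = gmap ψ then 1 else 0),
    (fun α a _ _ _ => if α = a then 1 else 0), (fun β b _ _ _ => if β = b then 1 else 0),
    ⟨fun _ => by norm_num, by simp⟩, ⟨fun _ => by norm_num, by simp⟩, ?_, ?_, ?_, ?_, ?_, ?_⟩
  · intro χ l
    constructor
    · intro x; dsimp only; split <;> norm_num
    · simp [Finset.sum_ite_eq']
  · intro ψ l
    constructor
    · intro y; dsimp only; split <;> norm_num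
    · simp [Finset.sum_ite_eq']
  · intro a x χ u
    constructor
    · intro α; dsimp only; split <;> norm_num
    · simp [Finset.sum_ite_eq]
  · intro b y ψ u
    constructor
    · intro β; dsimp only; split <;> norm_num
    · simp [Finset.sum_ite_eq]
  · intro x y χ ψ; simp [myW]
  · intro α β a b x y χ ψ; simp [myW]

lemma myQ0_behavior : IsBehavior myQ0 := by
  constructor
  · intro a b x y; norm_num [myQ0]
  · intro x y; simp [myQ0, Fin.sum_univ_two]; norm_num

lemma myQ0_local : IsLocal myQ0 := by
  refine ⟨1, (fun _ => 1), (fun _ _ _ => 1/2), (fun _ _ _ => 1/2),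
    ⟨fun _ => by norm_num, by simp⟩, ?_, ?_, ?_⟩
  · intro x l; constructor
    · intro a; norm_num
    · rw [Fin.sum_univ_two]; norm_num
  · intro y l; constructor
    · intro b; norm_num
    · rw [Fin.sum_univ_two]; norm_num
  · intro a b x y; simp [myQ0]; norm_num

lemma relEnt_P_Q0 (x y : Fin 4) :
    relEnt (outDist myP x y) (outDist myQ0 x y)
      = if x.val ≤ 1 ∧ y.val ≤ 1 then ENNReal.ofReal (Real.log 2) else 0 := by
  rw [relEnt, if_neg]
  swap
  · push_neg
    intro z _
    norm_num [outDist, myQ0]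
  rw [Fintype.sum_prod_type]
  by_cases h : x.val ≤ 1 ∧ y.val ≤ 1
  · rw [if_pos h]
    by_cases hodd : oddcell x y
    · have hv00 : myP 0 0 x y = 0 := by simp [myP, h.1, h.2, hodd]
      have hv11 : myP 1 1 x y = 0 := by simp [myP, h.1, h.2, hodd]
      have hv01 : myP 0 1 x y = 1/2 := by simp [myP, h.1, h.2, hodd]
      have hv10 : myP 1 0 x y = 1/2 := by simp [myP, h.1, h.2, hodd]
      simp only [Fin.sum_univ_two, outDist, myQ0, hv00, hv01, hv10, hv11, zero_mul,
        zero_add, add_zero]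
      rw [show ((1:ℝ)/2 / (1/4)) = 2 by norm_num]
      congr 1
      ring
    · have hv00 : myP 0 0 x y = 1/2 := by simp [myP, h.1, h.2, hodd]
      have hv11 : myP 1 1 x y = 1/2 := by simp [myP, h.1, h.2, hodd]
      have hv01 : myP 0 1 x y = 0 := by simp [myP, h.1, h.2, hodd]
      have hv10 : myP 1 0 x y = 0 := by simp [myP, h.1, h.2, hodd]
      simp only [Fin.sum_univ_two, outDist, myQ0, hv00, hv01, hv10, hv11, zero_mul,
        zero_add, add_zero]
      rw [show ((1:ℝ)/2 / (1/4)) = 2 by norm_num]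
      congr 1
      ring
  · rw [if_neg h]
    have hv : ∀ a b : Fin 2, myP a b x y = 1/4 := by
      intro a b; unfold myP; rw [if_neg h]
    simp only [Fin.sum_univ_two, outDist, myQ0, hv]
    rw [show ((1:ℝ)/4 / (1/4)) = 1 by norm_num]
    simp [Real.log_one]

/-- Mass that `Q` puts on the support of the wired PR box at cell `(x,y)`. -/
noncomputable def tmass (Q : Fin 2 → Fin 2 → Fin 4 → Fin 4 → ℝ) (x y : Fin 4) : ℝ :=
  if oddcell x y then Q 0 1 x y + Q 1 0 x y else Q 0 0 x y + Q 1 1 x y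

lemma tmass_mem (Q : Fin 2 → Fin 2 → Fin 4 → Fin 4 → ℝ) (hQ : IsBehavior Q)
    (x y : Fin 4) : 0 ≤ tmass Q x y ∧ tmass Q x y ≤ 1 := by
  have hs := hQ.2 x y
  simp only [Fin.sum_univ_two] at hs
  have n00 := hQ.1 0 0 x y
  have n01 := hQ.1 0 1 x y
  have n10 := hQ.1 1 0 x y
  have n11 := hQ.1 1 1 x y
  unfold tmass
  split <;> constructor <;> linarith

lemma stepA (Q : Fin 2 → Fin 2 → Fin 4 → Fin 4 → ℝ) (hQ : IsBehavior Q) (x y : Fin 4) :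
    ENNReal.ofReal (1 - tmass Q x y)
      ≤ relEnt (outDist (myW.apply myP) x y) (outDist Q x y) := by
  rw [relEnt]
  split
  · exact le_top
  · rename_i htop
    push_neg at htop
    by_cases hodd : oddcell x y
    · have w00 : outDist (myW.apply myP) x y (0,0) = 0 := by
        show myW.apply myP 0 0 x y = 0
        rw [WP_dist]; simp [hodd]
      have w11 : outDist (myW.apply myP) x y (1,1) = 0 := by
        show myW.apply myP 1 1 x y = 0
        rw [WP_dist]; simp [hodd]
      have w01 : outDist (myW.apply myP) x y (0,1) = 1/2 := by
        show myW.apply myP 0 1 x y = 1/2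
        rw [WP_dist]; simp [hodd]
      have w10 : outDist (myW.apply myP) x y (1,0) = 1/2 := by
        show myW.apply myP 1 0 x y = 1/2
        rw [WP_dist]; simp [hodd]
      have h1 : 0 < Q 0 1 x y :=
        lt_of_le_of_ne (hQ.1 0 1 x y) (Ne.symm (htop (0,1) (by rw [w01]; norm_num)))
      have h2 : 0 < Q 1 0 x y :=
        lt_of_le_of_ne (hQ.1 1 0 x y) (Ne.symm (htop (1,0) (by rw [w10]; norm_num)))
      rw [Fintype.sum_prod_type]
      simp only [Fin.sum_univ_two, w00, w01, w10, w11, zero_mul, zero_add, add_zero]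
      apply ENNReal.ofReal_le_ofReal
      have key := key_ineq (Q 0 1 x y) (Q 1 0 x y) h1 h2
      have ht : tmass Q x y = Q 0 1 x y + Q 1 0 x y := by simp [tmass, hodd]
      rw [ht]
      show _ ≤ 1/2 * Real.log (1/2 / Q 0 1 x y) + 1/2 * Real.log (1/2 / Q 1 0 x y)
      linarith
    · have w01 : outDist (myW.apply myP) x y (0,1) = 0 := by
        show myW.apply myP 0 1 x y = 0
        rw [WP_dist]; simp [hodd]
      have w10 : outDist (myW.apply myP) x y (1,0) = 0 := by
        show myW.apply myP 1 0 x y = 0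
        rw [WP_dist]; simp [hodd]
      have w00 : outDist (myW.apply myP) x y (0,0) = 1/2 := by
        show myW.apply myP 0 0 x y = 1/2
        rw [WP_dist]; simp [hodd]
      have w11 : outDist (myW.apply myP) x y (1,1) = 1/2 := by
        show myW.apply myP 1 1 x y = 1/2
        rw [WP_dist]; simp [hodd]
      have h1 : 0 < Q 0 0 x y :=
        lt_of_le_of_ne (hQ.1 0 0 x y) (Ne.symm (htop (0,0) (by rw [w00]; norm_num)))
      have h2 : 0 < Q 1 1 x y :=
        lt_of_le_of_ne (hQ.1 1 1 x y) (Ne.symm (htop (1,1) (by rw [w11]; norm_num)))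
      rw [Fintype.sum_prod_type]
      simp only [Fin.sum_univ_two, w00, w01, w10, w11, zero_mul, zero_add, add_zero]
      apply ENNReal.ofReal_le_ofReal
      have key := key_ineq (Q 0 0 x y) (Q 1 1 x y) h1 h2
      have ht : tmass Q x y = Q 0 0 x y + Q 1 1 x y := by simp [tmass, hodd]
      rw [ht]
      show _ ≤ 1/2 * Real.log (1/2 / Q 0 0 x y) + 1/2 * Real.log (1/2 / Q 1 1 x y)
      linarith

lemma stepB (Q : Fin 2 → Fin 2 → Fin 4 → Fin 4 → ℝ) (hL : IsLocal Q) :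
    ∑ x : Fin 4, ∑ y : Fin 4, tmass Q x y ≤ 12 := by
  obtain ⟨n, q, QA, QB, ⟨hqnn, hqsum⟩, hQA, hQB, hrep⟩ := hL
  have hQA1 : ∀ x l, QA 1 x l = 1 - QA 0 x l := by
    intro x l; have := (hQA x l).2; rw [Fin.sum_univ_two] at this; linarith
  have hQB1 : ∀ y l, QB 1 y l = 1 - QB 0 y l := by
    intro y l; have := (hQB y l).2; rw [Fin.sum_univ_two] at this; linarith
  have hQA01 : ∀ x l, 0 ≤ QA 0 x l ∧ QA 0 x l ≤ 1 := by
    intro x l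
    have h1 := (hQA x l).1 1
    have h0 := (hQA x l).1 0
    have hs := (hQA x l).2
    rw [Fin.sum_univ_two] at hs
    exact ⟨h0, by linarith⟩
  have hQB01 : ∀ y l, 0 ≤ QB 0 y l ∧ QB 0 y l ≤ 1 := by
    intro y l
    have h1 := (hQB y l).1 1
    have h0 := (hQB y l).1 0
    have hs := (hQB y l).2
    rw [Fin.sum_univ_two] at hs
    exact ⟨h0, by linarith⟩
  have key : ∀ x y, tmass Q x y = ∑ l, q l *
      (if oddcell x y then QA 0 x l * (1 - QB 0 y l) + (1 - QA 0 x l) * QB 0 y l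
        else QA 0 x l * QB 0 y l + (1 - QA 0 x l) * (1 - QB 0 y l)) := by
    intro x y
    by_cases hodd : oddcell x y <;>
      simp only [tmass, hodd, if_true, if_false, hrep, ite_true, ite_false,
        not_false_iff] <;>
      rw [← Finset.sum_add_distrib] <;>
      refine Finset.sum_congr rfl fun l _ => ?_ <;>
      simp only [hQA1, hQB1] <;> ring
  calc ∑ x : Fin 4, ∑ y : Fin 4, tmass Q x y
      = ∑ x : Fin 4, ∑ y : Fin 4, ∑ l, q l *
          (if oddcell x y then QA 0 x l * (1 - QB 0 y l) + (1 - QA 0 x l) * QB 0 y l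
            else QA 0 x l * QB 0 y l + (1 - QA 0 x l) * (1 - QB 0 y l)) := by
        exact Finset.sum_congr rfl fun x _ => Finset.sum_congr rfl fun y _ => key x y
    _ = ∑ x : Fin 4, ∑ l, ∑ y : Fin 4, q l *
          (if oddcell x y then QA 0 x l * (1 - QB 0 y l) + (1 - QA 0 x l) * QB 0 y l
            else QA 0 x l * QB 0 y l + (1 - QA 0 x l) * (1 - QB 0 y l)) :=
        Finset.sum_congr rfl fun x _ => Finset.sum_comm
    _ = ∑ l, ∑ x : Fin 4, ∑ y : Fin 4, q l *
          (if oddcell x y then QA 0 x l * (1 - QB 0 y l) + (1 - QA 0 x l) * QB 0 y l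
            else QA 0 x l * QB 0 y l + (1 - QA 0 x l) * (1 - QB 0 y l)) :=
        Finset.sum_comm
    _ = ∑ l, q l * ∑ x : Fin 4, ∑ y : Fin 4,
          (if oddcell x y then QA 0 x l * (1 - QB 0 y l) + (1 - QA 0 x l) * QB 0 y l
            else QA 0 x l * QB 0 y l + (1 - QA 0 x l) * (1 - QB 0 y l)) := by
        simp only [Finset.mul_sum]
    _ ≤ ∑ l, q l * 12 :=
        Finset.sum_le_sum fun l _ => mul_le_mul_of_nonneg_left
          (sumS_le (fun x => QA 0 x l) (fun y => QB 0 y l)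
            (fun x => hQA01 x l) (fun y => hQB01 y l)) (hqnn l)
    _ = 12 := by rw [← Finset.sum_mul, hqsum, one_mul]

lemma lowerSum (Q : Fin 2 → Fin 2 → Fin 4 → Fin 4 → ℝ) (hQ : IsBehavior Q)
    (hL : IsLocal Q) :
    ENNReal.ofReal 4
      ≤ ∑ x : Fin 4, ∑ y : Fin 4, relEnt (outDist (myW.apply myP) x y) (outDist Q x y) := by
  have h1 : ∀ x y, 0 ≤ 1 - tmass Q x y := fun x y => by
    have := (tmass_mem Q hQ x y).2; linarith
  calc ENNReal.ofReal 4
      ≤ ENNReal.ofReal (∑ x : Fin 4, ∑ y : Fin 4, (1 - tmass Q x y)) := by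
        apply ENNReal.ofReal_le_ofReal
        have hb := stepB Q hL
        have e : ∑ x : Fin 4, ∑ y : Fin 4, ((1:ℝ) - tmass Q x y)
            = (∑ x : Fin 4, ∑ y : Fin 4, (1:ℝ)) - ∑ x : Fin 4, ∑ y : Fin 4, tmass Q x y := by
          rw [← Finset.sum_sub_distrib]
          exact Finset.sum_congr rfl fun x _ => Finset.sum_sub_distrib _ _
        have e16 : ∑ x : Fin 4, ∑ y : Fin 4, (1:ℝ) = 16 := by norm_num
        rw [e, e16]; linarith
    _ = ∑ x : Fin 4, ∑ y : Fin 4, ENNReal.ofReal (1 - tmass Q x y) := by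
        rw [ENNReal.ofReal_sum_of_nonneg (fun x _ => Finset.sum_nonneg fun y _ => h1 x y)]
        exact Finset.sum_congr rfl fun x _ =>
          ENNReal.ofReal_sum_of_nonneg fun y _ => h1 x y
    _ ≤ _ := Finset.sum_le_sum fun x _ => Finset.sum_le_sum fun y _ => stepA Q hQ x y

end Counterexample

/-- the uniform-input statistical strength `S_u` is not an LOSR
monotone. -/
theorem Su_not_LOSR_monotone :
    ∃ (r s : ℕ) (P : Fin r → Fin r → Fin s → Fin s → ℝ)
      (W : GlobalWiring r s r s),
      IsBehavior P ∧ NoSignaling P ∧ W.IsLOSR ∧ Su P < Su (W.apply P) := by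
  refine ⟨2, 4, myP, myW, myP_behavior, myP_nosignaling, myW_losr, ?_⟩
  have hlog : (0:ℝ) ≤ Real.log 2 := Real.log_nonneg (by norm_num)
  have hsum : (∑ x : Fin 4, ∑ y : Fin 4, relEnt (outDist myP x y) (outDist myQ0 x y))
      = ENNReal.ofReal (4 * Real.log 2) := by
    simp only [relEnt_P_Q0]
    rw [show (4:ℝ) * Real.log 2
        = Real.log 2 + Real.log 2 + Real.log 2 + Real.log 2 by ring]
    rw [ENNReal.ofReal_add (by linarith) hlog, ENNReal.ofReal_add (by linarith) hlog,
      ENNReal.ofReal_add hlog hlog]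
    simp [Fin.sum_univ_four, show ((2:Fin 4)).val = 2 from rfl,
      show ((3:Fin 4)).val = 3 from rfl]
    ring
  have hupper : Su myP ≤ (((4:ℕ) : ℝ≥0∞) ^ 2)⁻¹ * ENNReal.ofReal (4 * Real.log 2) := by
    refine le_trans (iInf₂_le myQ0 ⟨myQ0_behavior, myQ0_local⟩) ?_
    rw [hsum]
  have hlower : (((4:ℕ) : ℝ≥0∞) ^ 2)⁻¹ * ENNReal.ofReal 4 ≤ Su (myW.apply myP) := by
    refine le_iInf fun Q => le_iInf fun hc => ?_
    exact mul_le_mul_right (lowerSum Q hc.1 hc.2) _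
  have hcoef0 : (((4:ℕ) : ℝ≥0∞) ^ 2)⁻¹ ≠ 0 := by
    simp [ENNReal.inv_ne_zero]
  have hcoeft : (((4:ℕ) : ℝ≥0∞) ^ 2)⁻¹ ≠ ⊤ := by
    simp [ENNReal.inv_ne_top]
  have hgap : (((4:ℕ) : ℝ≥0∞) ^ 2)⁻¹ * ENNReal.ofReal (4 * Real.log 2)
      < (((4:ℕ) : ℝ≥0∞) ^ 2)⁻¹ * ENNReal.ofReal 4 := by
    rw [ENNReal.mul_lt_mul_iff_right hcoef0 hcoeft]
    refine (ENNReal.ofReal_lt_ofReal_iff (by norm_num)).2 ?_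
    nlinarith [Real.log_two_lt_d9]
  exact lt_of_le_of_lt hupper (lt_of_lt_of_le hgap hlower)
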